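/- Let Ĝ be a spectral-extremal gem-free graph (maximizing ρ over gem-free graphs with m ≥ 23 edges, m odd, no isolated vertices, excluding S_{(m+3)/2,2}), with extremal vertex û. Then e(N_+(û)) ≥ 4, where N_+(û) is the set of non-isolated vertices of Ĝ[N(û)]. -/

import Mathlib

open scoped Classical
open SimpleGraph Matrix

def ContainsCopy {α β : Type*} (H : SimpleGraph α) (G : SimpleGraph β) : Prop :=
  ∃ f : α ↪ β, ∀ a b, H.Adj a b → G.Adj (f a) (f b)

def gem : SimpleGraph (Fin 5) :=
  SimpleGraph.fromRel (fun a b => (b.val = a.val + 1 ∧ b.val ≤ 3) ∨ b = 4)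

def bookS (k : ℕ) : SimpleGraph (Fin 2 ⊕ Fin k) :=
  SimpleGraph.fromRel (fun a _ => a.isLeft = true)

def pendantS (s t : ℕ) : SimpleGraph (Fin 2 ⊕ (Fin s ⊕ Fin t)) :=
  SimpleGraph.fromRel (fun a b =>
    match a, b with
    | Sum.inl _, Sum.inl _ => True
    | Sum.inl _, Sum.inr (Sum.inl _) => True
    | Sum.inl i, Sum.inr (Sum.inr _) => i = 0
    | _, _ => False)

def starG (r : ℕ) : SimpleGraph (Fin (r + 1)) :=
  SimpleGraph.fromRel (fun a _ => a = 0)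

noncomputable def specRad {V : Type*} [Fintype V] (G : SimpleGraph V) : ℝ :=
  sSup {μ : ℝ | Module.End.HasEigenvalue (Matrix.mulVecLin (G.adjMatrix ℝ)) μ}

noncomputable def edgeCount {V : Type*} [Fintype V] (G : SimpleGraph V) : ℕ :=
  G.edgeFinset.card

noncomputable def edgesIn {V : Type*} [Fintype V] (G : SimpleGraph V) (S : Finset V) : ℕ :=
  (G.edgeFinset.filter (fun e => ∀ v ∈ e, v ∈ S)).card

noncomputable def N0 {V : Type*} [Fintype V] (G : SimpleGraph V) (u : V) : Finset V :=
  (G.neighborFinset u).filter (fun v => ∀ w ∈ G.neighborFinset u, ¬ G.Adj v w)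

noncomputable def Nplus {V : Type*} [Fintype V] (G : SimpleGraph V) (u : V) : Finset V :=
  G.neighborFinset u \ N0 G u

noncomputable def Wset {V : Type*} [Fintype V] (G : SimpleGraph V) (u : V) : Finset V :=
  Finset.univ \ insert u (G.neighborFinset u)

def InFamily (m : ℕ) {V : Type*} [Fintype V] (G : SimpleGraph V) : Prop :=
  ¬ ContainsCopy gem G ∧ edgeCount G = m ∧ (∀ v : V, ∃ w, G.Adj v w) ∧
    ¬ Nonempty (G ≃g bookS ((m - 1) / 2))

def MaxInFamily (m : ℕ) {V : Type*} [Fintype V] (G : SimpleGraph V) : Prop :=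
  InFamily m G ∧ ∀ (n : ℕ) (H : SimpleGraph (Fin n)), InFamily m H → specRad H ≤ specRad G

def IsCutVertex {V : Type*} (G : SimpleGraph V) (v : V) : Prop :=
  ∃ a b : {x : V // x ≠ v}, G.Reachable a.1 b.1 ∧
    ¬ (G.induce {x : V | x ≠ v}).Reachable a b

/-! ### Auxiliary lemmas -/

section Aux

open Sum

/-- Any eigenvalue of the adjacency matrix is at most the number of vertices. -/
lemma aux_adj_ev_le_card {W : Type*} [Fintype W] (G : SimpleGraph W) (μ : ℝ)
    (h : Module.End.HasEigenvalue (Matrix.mulVecLin (G.adjMatrix ℝ)) μ) :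
    μ ≤ (Fintype.card W : ℝ) := by
  obtain ⟨y, hy1, hy2⟩ := h.exists_hasEigenvector
  have hAy : G.adjMatrix ℝ *ᵥ y = μ • y := by
    have := Module.End.mem_eigenspace_iff.mp hy1
    simpa [Matrix.mulVecLin_apply] using this
  obtain ⟨j, hj⟩ : ∃ j, y j ≠ 0 := by
    by_contra hc; push_neg at hc; exact hy2 (funext fun w => hc w)
  obtain ⟨i, -, hi⟩ := Finset.exists_max_image Finset.univ (fun w => |y w|) ⟨j, Finset.mem_univ j⟩
  have hipos : 0 < |y i| := lt_of_lt_of_le (abs_pos.mpr hj) (hi j (Finset.mem_univ j))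
  have h1 : μ * y i = ∑ w ∈ G.neighborFinset i, y w := by
    have := congrFun hAy i
    rw [SimpleGraph.adjMatrix_mulVec_apply] at this
    simpa [Pi.smul_apply, smul_eq_mul] using this.symm
  have h2 : |μ| * |y i| ≤ (Fintype.card W : ℝ) * |y i| := by
    rw [← abs_mul, h1]
    calc |∑ w ∈ G.neighborFinset i, y w| ≤ ∑ w ∈ G.neighborFinset i, |y w| :=
          Finset.abs_sum_le_sum_abs _ _
      _ ≤ (G.neighborFinset i).card • |y i| :=
          Finset.sum_le_card_nsmul _ _ _ (fun w _ => hi w (Finset.mem_univ w))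
      _ ≤ (Fintype.card W : ℝ) * |y i| := by
          rw [nsmul_eq_mul]
          exact mul_le_mul_of_nonneg_right
            (by exact_mod_cast Finset.card_le_univ _) (abs_nonneg _)
  exact le_trans (le_abs_self μ) (le_of_mul_le_mul_right h2 hipos)

lemma aux_le_specRad {W : Type*} [Fintype W] (G : SimpleGraph W) (μ : ℝ)
    (h : Module.End.HasEigenvalue (Matrix.mulVecLin (G.adjMatrix ℝ)) μ) :
    μ ≤ specRad G :=
  le_csSup ⟨(Fintype.card W : ℝ), fun _ hν => aux_adj_ev_le_card G _ hν⟩ h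

lemma aux_filter_mem_sym2_card_le {V : Type*} [Fintype V] (S : Finset V) (e : Sym2 V) :
    (S.filter (fun v => v ∈ e)).card ≤ 1 + (if (∀ v ∈ e, v ∈ S) then 1 else 0) := by
  induction e with
  | _ a b =>
    by_cases hall : ∀ v ∈ (s(a, b) : Sym2 V), v ∈ S
    · rw [if_pos hall]
      calc (S.filter (fun v => v ∈ (s(a,b) : Sym2 V))).card
          ≤ ({a, b} : Finset V).card := by
            apply Finset.card_le_card
            intro v hv
            simp only [Finset.mem_filter, Sym2.mem_iff] at hv
            simp [hv.2]
        _ ≤ 2 := Finset.card_insert_le _ _ |>.trans (by simp)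
    · rw [if_neg hall]
      push_neg at hall
      obtain ⟨w, hw, hwS⟩ := hall
      rw [Sym2.mem_iff] at hw
      rcases hw with rfl | rfl
      · calc (S.filter (fun v => v ∈ (s(w, b) : Sym2 V))).card
            ≤ ({b} : Finset V).card := by
              apply Finset.card_le_card
              intro v hv
              simp only [Finset.mem_filter, Sym2.mem_iff] at hv
              rcases hv.2 with rfl | rfl
              · exact absurd hv.1 hwS
              · simp
          _ = 1 := by simp
      · calc (S.filter (fun v => v ∈ (s(a, w) : Sym2 V))).card
            ≤ ({a} : Finset V).card := by
              apply Finset.card_le_card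
              intro v hv
              simp only [Finset.mem_filter, Sym2.mem_iff] at hv
              rcases hv.2 with rfl | rfl
              · simp
              · exact absurd hv.1 hwS
          _ = 1 := by simp

lemma aux_sum_degree_le {V : Type*} [Fintype V] (G : SimpleGraph V) (S : Finset V) :
    ∑ v ∈ S, G.degree v ≤ edgeCount G + edgesIn G S := by
  have hdeg : ∀ v, G.degree v = ∑ e ∈ G.edgeFinset, (if v ∈ e then 1 else 0) := by
    intro v
    rw [← SimpleGraph.card_incidenceFinset_eq_degree, SimpleGraph.incidenceFinset_eq_filter,
      Finset.card_filter]
  calc ∑ v ∈ S, G.degree v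
      = ∑ e ∈ G.edgeFinset, ∑ v ∈ S, (if v ∈ e then 1 else 0) := by
        rw [Finset.sum_comm]
        exact Finset.sum_congr rfl fun v _ => hdeg v
    _ = ∑ e ∈ G.edgeFinset, (S.filter (fun v => v ∈ e)).card := by
        refine Finset.sum_congr rfl fun e _ => ?_
        rw [Finset.card_filter]
    _ ≤ ∑ e ∈ G.edgeFinset, (1 + if (∀ v ∈ e, v ∈ S) then 1 else 0) :=
        Finset.sum_le_sum fun e _ => aux_filter_mem_sym2_card_le S e
    _ = edgeCount G + edgesIn G S := by
        rw [Finset.sum_add_distrib, Finset.sum_const, smul_eq_mul, mul_one]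
        congr 1
        rw [edgesIn, Finset.card_filter]

lemma aux_edgesIn_Nplus_eq {V : Type*} [Fintype V] (G : SimpleGraph V) (u : V) :
    edgesIn G (Nplus G u) = edgesIn G (G.neighborFinset u) := by
  unfold edgesIn
  congr 1
  apply Finset.filter_congr
  intro e he
  rw [SimpleGraph.mem_edgeFinset] at he
  constructor
  · intro h v hv
    have := h v hv
    rw [Nplus, Finset.mem_sdiff] at this
    exact this.1
  · intro h v hv
    rw [Nplus, Finset.mem_sdiff]
    refine ⟨h v hv, ?_⟩
    rw [N0, Finset.mem_filter]
    rintro ⟨-, hiso⟩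
    induction e with
    | _ a b =>
      have hab : G.Adj a b := he
      rw [Sym2.mem_iff] at hv
      rcases hv with rfl | rfl
      · exact hiso b (h b (Sym2.mem_mk_right _ _)) hab
      · exact hiso a (h a (Sym2.mem_mk_left _ _)) hab.symm

/-! #### Facts about the pendant graph -/

variable {s t : ℕ}

lemma pend_adj_ll (i j : Fin 2) : (pendantS s t).Adj (inl i) (inl j) ↔ i ≠ j := by
  simp [pendantS, SimpleGraph.fromRel_adj]

lemma pend_adj_lp (i : Fin 2) (p : Fin s) : (pendantS s t).Adj (inl i) (inr (inl p)) := by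
  simp [pendantS, SimpleGraph.fromRel_adj]

lemma pend_adj_lq (i : Fin 2) (q : Fin t) : (pendantS s t).Adj (inl i) (inr (inr q)) ↔ i = 0 := by
  simp [pendantS, SimpleGraph.fromRel_adj]

lemma pend_adj_rr (a b : Fin s ⊕ Fin t) : ¬ (pendantS s t).Adj (inr a) (inr b) := by
  rcases a with p | q <;> rcases b with p' | q' <;>
    simp [pendantS, SimpleGraph.fromRel_adj]

lemma pend_nbr_q {q : Fin t} {z : Fin 2 ⊕ (Fin s ⊕ Fin t)}
    (h : (pendantS s t).Adj (inr (inr q)) z) : z = inl 0 := by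
  rcases z with i | (p | q')
  · have := (pend_adj_lq (s := s) i q).mp h.symm
    rw [this]
  · exact absurd h (pend_adj_rr _ _)
  · exact absurd h (pend_adj_rr _ _)

lemma pend_nbr_1 {z : Fin 2 ⊕ (Fin s ⊕ Fin t)}
    (h : (pendantS s t).Adj (inl 1) z) : z = inl 0 ∨ ∃ p : Fin s, z = inr (inl p) := by
  rcases z with i | (p | q)
  · left
    have hne := (pend_adj_ll (s := s) (t := t) 1 i).mp h
    have : i = 0 := by omega
    rw [this]
  · exact Or.inr ⟨p, rfl⟩
  · have := (pend_adj_lq (s := s) 1 q).mp h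
    exact absurd this (by decide)

lemma pend_nbr_p {p : Fin s} {z : Fin 2 ⊕ (Fin s ⊕ Fin t)}
    (h : (pendantS s t).Adj (inr (inl p)) z) : z = inl 0 ∨ z = inl 1 := by
  rcases z with i | (p' | q)
  · have hi : i = 0 ∨ i = 1 := by omega
    rcases hi with rfl | rfl
    · exact Or.inl rfl
    · exact Or.inr rfl
  · exact absurd h (pend_adj_rr _ _)
  · exact absurd h (pend_adj_rr _ _)

lemma pend_edge_one {z w : Fin 2 ⊕ (Fin s ⊕ Fin t)} (h : (pendantS s t).Adj z w)
    (hz : z ≠ inl 0) (hw : w ≠ inl 0) : z = inl 1 ∨ w = inl 1 := by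
  rcases z with i | a
  · left
    have : i ≠ 0 := fun hi => hz (by rw [hi])
    have : i = 1 := by omega
    rw [this]
  · rcases w with j | b
    · right
      have : j ≠ 0 := fun hj => hw (by rw [hj])
      have : j = 1 := by omega
      rw [this]
    · exact absurd h (pend_adj_rr _ _)

lemma pend_edge_zero {z w : Fin 2 ⊕ (Fin s ⊕ Fin t)} (h : (pendantS s t).Adj z w)
    (hz : z = inl 0 ∨ ∃ p : Fin s, z = inr (inl p))
    (hw : w = inl 0 ∨ ∃ p : Fin s, w = inr (inl p)) : z = inl 0 ∨ w = inl 0 := by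
  rcases hz with hz | ⟨p, rfl⟩
  · exact Or.inl hz
  rcases hw with hw | ⟨p', rfl⟩
  · exact Or.inr hw
  · exact absurd h (pend_adj_rr _ _)

lemma aux_three_edges_contra {α : Type*} {f0 f1 f2 f3 z : α}
    (hinj : f0 ≠ f2 ∧ f0 ≠ f3 ∧ f1 ≠ f2 ∧ f1 ≠ f3)
    (h01 : z = f0 ∨ z = f1) (h23 : z = f2 ∨ z = f3) : False := by
  rcases h01 with rfl | rfl <;> rcases h23 with h | h <;> tauto

lemma gem_adj_01 : gem.Adj 0 1 := by
  rw [gem, SimpleGraph.fromRel_adj]; exact ⟨by decide, Or.inl (by decide)⟩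
lemma gem_adj_12 : gem.Adj 1 2 := by
  rw [gem, SimpleGraph.fromRel_adj]; exact ⟨by decide, Or.inl (by decide)⟩
lemma gem_adj_23 : gem.Adj 2 3 := by
  rw [gem, SimpleGraph.fromRel_adj]; exact ⟨by decide, Or.inl (by decide)⟩
lemma gem_adj_4 (a : Fin 5) (ha : a ≠ 4) : gem.Adj a 4 := by
  rw [gem, SimpleGraph.fromRel_adj]; exact ⟨ha, Or.inl (Or.inr rfl)⟩

lemma pend_gem_free : ¬ ContainsCopy gem (pendantS s t) := by
  rintro ⟨f, hf⟩
  have h01 : (pendantS s t).Adj (f 0) (f 1) := hf 0 1 gem_adj_01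
  have h12 : (pendantS s t).Adj (f 1) (f 2) := hf 1 2 gem_adj_12
  have h23 : (pendantS s t).Adj (f 2) (f 3) := hf 2 3 gem_adj_23
  have h04 : (pendantS s t).Adj (f 0) (f 4) := hf 0 4 (gem_adj_4 0 (by decide))
  have h14 : (pendantS s t).Adj (f 1) (f 4) := hf 1 4 (gem_adj_4 1 (by decide))
  have h24 : (pendantS s t).Adj (f 2) (f 4) := hf 2 4 (gem_adj_4 2 (by decide))
  have h34 : (pendantS s t).Adj (f 3) (f 4) := hf 3 4 (gem_adj_4 3 (by decide))
  have hinj : f 0 ≠ f 2 ∧ f 0 ≠ f 3 ∧ f 1 ≠ f 2 ∧ f 1 ≠ f 3 :=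
    ⟨fun h => by simpa using f.injective h, fun h => by simpa using f.injective h,
     fun h => by simpa using f.injective h, fun h => by simpa using f.injective h⟩
  rcases hv4 : f 4 with i | (p | q)
  · have hi : i = 0 ∨ i = 1 := by omega
    rw [hv4] at h04 h14 h24 h34
    rcases hi with rfl | rfl
    · have hne : ∀ j : Fin 5, (pendantS s t).Adj (f j) (inl 0) → f j ≠ inl 0 :=
        fun j hj => hj.ne
      have n0 := hne 0 h04
      have n1 := hne 1 h14
      have n2 := hne 2 h24
      have n3 := hne 3 h34
      have e01 := pend_edge_one h01 n0 n1
      have e23 := pend_edge_one h23 n2 n3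
      exact aux_three_edges_contra hinj
        (by rcases e01 with h | h; exacts [Or.inl h.symm, Or.inr h.symm])
        (by rcases e23 with h | h; exacts [Or.inl h.symm, Or.inr h.symm])
    · have m0 := pend_nbr_1 h04.symm
      have m1 := pend_nbr_1 h14.symm
      have m2 := pend_nbr_1 h24.symm
      have m3 := pend_nbr_1 h34.symm
      have e01 := pend_edge_zero h01 m0 m1
      have e23 := pend_edge_zero h23 m2 m3
      exact aux_three_edges_contra hinj
        (by rcases e01 with h | h; exacts [Or.inl h.symm, Or.inr h.symm])
        (by rcases e23 with h | h; exacts [Or.inl h.symm, Or.inr h.symm])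
  · rw [hv4] at h04 h14 h24
    have e0 := pend_nbr_p h04.symm
    have e1 := pend_nbr_p h14.symm
    have e2 := pend_nbr_p h24.symm
    have d01 : f 0 ≠ f 1 := fun h => by simpa using f.injective h
    have d02 : f 0 ≠ f 2 := hinj.1
    have d12 : f 1 ≠ f 2 := hinj.2.2.1
    rcases e0 with h0 | h0 <;> rcases e1 with h1 | h1 <;> rcases e2 with h2 | h2 <;>
      first
        | exact d01 (h0.trans h1.symm)
        | exact d02 (h0.trans h2.symm)
        | exact d12 (h1.trans h2.symm)
  · rw [hv4] at h04 h14
    have e0 : f 0 = inl 0 := pend_nbr_q h04.symm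
    have e1 : f 1 = inl 0 := pend_nbr_q h14.symm
    exact absurd (e0.trans e1.symm) (fun h => by simpa using f.injective h)

lemma pend_deg_eq (v : Fin 2 ⊕ (Fin s ⊕ Fin t)) :
    (pendantS s t).degree v = ∑ w, if (pendantS s t).Adj v w then 1 else 0 := by
  rw [← SimpleGraph.card_neighborFinset_eq_degree, SimpleGraph.neighborFinset_eq_filter,
    Finset.card_filter]

lemma pend_deg_hub0 : (pendantS s t).degree (inl 0) = 1 + s + t := by
  rw [pend_deg_eq, Fintype.sum_sum_type, Fintype.sum_sum_type]
  simp [pend_adj_ll, pend_adj_lp, pend_adj_lq, Fin.sum_univ_two]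
  omega

lemma pend_deg_hub1 : (pendantS s t).degree (inl 1) = 1 + s := by
  rw [pend_deg_eq, Fintype.sum_sum_type, Fintype.sum_sum_type]
  simp [pend_adj_ll, pend_adj_lp, pend_adj_lq, Fin.sum_univ_two]

lemma pend_deg_page (p : Fin s) : (pendantS s t).degree (inr (inl p)) = 2 := by
  rw [pend_deg_eq, Fintype.sum_sum_type, Fintype.sum_sum_type]
  have h1 : ∀ i : Fin 2, (pendantS s t).Adj (inr (inl p)) (inl i) := fun i =>
    (pend_adj_lp i p).symm
  simp [h1, pend_adj_rr, Fin.sum_univ_two]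

lemma pend_deg_pend (q : Fin t) : (pendantS s t).degree (inr (inr q)) = 1 := by
  rw [pend_deg_eq, Fintype.sum_sum_type, Fintype.sum_sum_type]
  have h1 : ∀ i : Fin 2, (pendantS s t).Adj (inr (inr q)) (inl i) ↔ i = 0 := fun i =>
    ⟨fun h => (pend_adj_lq i q).mp h.symm, fun h => by subst h; exact ((pend_adj_lq 0 q).mpr rfl).symm⟩
  simp [h1, pend_adj_rr, Fin.sum_univ_two]

lemma pend_edgeCount : edgeCount (pendantS s t) = 1 + 2 * s + t := by
  have hsum : ∑ v, (pendantS s t).degree v = 2 * (1 + 2 * s + t) := by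
    rw [Fintype.sum_sum_type, Fintype.sum_sum_type]
    simp only [Fin.sum_univ_two, pend_deg_hub0, pend_deg_hub1, pend_deg_page, pend_deg_pend,
      Finset.sum_const, Finset.card_univ, Fintype.card_fin, smul_eq_mul, mul_one]
    ring
  have := (pendantS s t).sum_degrees_eq_twice_card_edges
  rw [hsum] at this
  unfold edgeCount
  omega

noncomputable def pvec (s t : ℕ) (b c d : ℝ) : (Fin 2 ⊕ (Fin s ⊕ Fin t)) → ℝ :=
  Sum.elim (fun i => if i = 0 then 1 else b) (Sum.elim (fun _ => c) (fun _ => d))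

lemma pend_mulVec_eq (lam b c d : ℝ)
    (E1 : b + s * c + t * d = lam * 1)
    (E2 : 1 + s * c = lam * b)
    (E3 : 1 + b = lam * c)
    (E4 : 1 = lam * d) :
    (pendantS s t).adjMatrix ℝ *ᵥ (pvec s t b c d) = lam • (pvec s t b c d) := by
  funext v
  rw [SimpleGraph.adjMatrix_mulVec_apply, SimpleGraph.neighborFinset_eq_filter,
    Finset.sum_filter]
  rcases v with i | (p | q)
  · have hi : i = 0 ∨ i = 1 := by omega
    rcases hi with rfl | rfl
    · rw [Fintype.sum_sum_type, Fintype.sum_sum_type]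
      simp only [pend_adj_ll, pend_adj_lp, pend_adj_lq, pvec, Sum.elim_inl, Sum.elim_inr,
        Fin.sum_univ_two, Finset.sum_const, Finset.card_univ, Fintype.card_fin, smul_eq_mul,
        Pi.smul_apply, if_true, if_pos rfl]
      norm_num
      linarith [E1]
    · rw [Fintype.sum_sum_type, Fintype.sum_sum_type]
      simp only [pend_adj_ll, pend_adj_lp, pend_adj_lq, pvec, Sum.elim_inl, Sum.elim_inr,
        Fin.sum_univ_two, Finset.sum_const, Finset.card_univ, Fintype.card_fin, smul_eq_mul,
        Pi.smul_apply]
      norm_num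
      linarith [E2]
  · have h1 : ∀ i : Fin 2, (pendantS s t).Adj (inr (inl p)) (inl i) := fun i =>
      (pend_adj_lp i p).symm
    rw [Fintype.sum_sum_type, Fintype.sum_sum_type]
    simp only [h1, pend_adj_rr, pvec, Sum.elim_inl, Sum.elim_inr, Fin.sum_univ_two,
      Finset.sum_const, Finset.card_univ, Fintype.card_fin, smul_eq_mul, Pi.smul_apply,
      if_true, if_false]
    norm_num
    linarith [E3]
  · have h1 : ∀ i : Fin 2, (pendantS s t).Adj (inr (inr q)) (inl i) ↔ i = 0 := fun i =>
      ⟨fun h => (pend_adj_lq i q).mp h.symm,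
       fun h => by subst h; exact ((pend_adj_lq 0 q).mpr rfl).symm⟩
    rw [Fintype.sum_sum_type, Fintype.sum_sum_type]
    simp only [h1, pend_adj_rr, pvec, Sum.elim_inl, Sum.elim_inr, Fin.sum_univ_two,
      Finset.sum_const, Finset.card_univ, Fintype.card_fin, smul_eq_mul, Pi.smul_apply,
      if_false]
    norm_num
    linarith [E4]

lemma aux_exists_lam (k : ℕ) (hk : 10 ≤ k) :
    ∃ lam b c d : ℝ, 5 < lam ∧ lam + (2 * k + 1) < lam ^ 2 ∧
      (b + k * c + 2 * d = lam * 1) ∧ (1 + k * c = lam * b) ∧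
      (1 + b = lam * c) ∧ ((1 : ℝ) = lam * d) := by
  have hk' : (10 : ℝ) ≤ k := by exact_mod_cast hk
  set p : ℝ → ℝ := fun x => (x ^ 2 - x - 2 * k) * (x ^ 2 + x - 1) - (x ^ 2 + x) with hp
  have hcont : ContinuousOn p (Set.Icc 5 (2 * k + 3)) := by fun_prop
  have h5M : (5 : ℝ) ≤ 2 * k + 3 := by linarith
  have hp5 : p 5 < 0 := by simp only [hp]; nlinarith
  have hpM : 0 < p (2 * k + 3) := by
    have hEq : p (2 * k + 3) =
        16 * (k:ℝ) ^ 4 + 88 * (k:ℝ) ^ 3 + 176 * (k:ℝ) ^ 2 + 158 * (k:ℝ) + 54 := by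
      simp only [hp]; ring
    rw [hEq]
    positivity
  have h0mem : (0 : ℝ) ∈ Set.Icc (p 5) (p (2 * k + 3)) := ⟨le_of_lt hp5, le_of_lt hpM⟩
  obtain ⟨lam, hlam, hplam⟩ := intermediate_value_Icc h5M hcont h0mem
  have hlam5 : 5 < lam := by
    rcases lt_or_eq_of_le hlam.1 with h | h
    · exact h
    · exfalso; rw [← h] at hplam; rw [hplam] at hp5; exact lt_irrefl 0 hp5
  have hlam0 : lam ≠ 0 := by linarith
  have hD : (0 : ℝ) < lam ^ 2 + lam - 1 := by nlinarith
  have hD' : lam ^ 2 + lam ≠ 0 := by nlinarith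
  have hpe : (lam ^ 2 - lam - 2 * k) * (lam ^ 2 + lam - 1) - (lam ^ 2 + lam) = 0 := hplam
  have hsq : lam + (2 * k + 1) < lam ^ 2 := by
    have hprod : (lam ^ 2 - lam - 2 * k - 1) * (lam ^ 2 + lam - 1) = 1 := by
      linear_combination hpe
    nlinarith [hprod, hD]
  refine ⟨lam, 1 - 2 / (lam ^ 2 + lam), (1 + (1 - 2 / (lam ^ 2 + lam))) / lam, 1 / lam,
    hlam5, hsq, ?_, ?_, ?_, ?_⟩
  · field_simp
    ring_nf
    linear_combination (-1 : ℝ) * hpe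
  · field_simp
    ring_nf
    linear_combination (-1 : ℝ) * hpe
  · field_simp
  · field_simp

lemma aux_iso_edgeCount {α β : Type*} [Fintype α] [Fintype β] {G : SimpleGraph α}
    {H : SimpleGraph β} (φ : G ≃g H) : edgeCount G = edgeCount H := by
  unfold edgeCount
  rw [SimpleGraph.edgeFinset_card, SimpleGraph.edgeFinset_card]
  exact Fintype.card_congr φ.mapEdgeSet

lemma aux_hasEig_comap {α β : Type*} [Fintype α] [Fintype β] (e : α ≃ β) (G : SimpleGraph α)
    (lam : ℝ) (y : α → ℝ) (hy : G.adjMatrix ℝ *ᵥ y = lam • y) (hy0 : y ≠ 0) :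
    Module.End.HasEigenvalue
      (Matrix.mulVecLin (((SimpleGraph.comap (e.symm : β → α) G)).adjMatrix ℝ)) lam := by
  set H := SimpleGraph.comap (e.symm : β → α) G with hH
  have hadj : ∀ v w : β, H.Adj v w ↔ G.Adj (e.symm v) (e.symm w) := fun v w => Iff.rfl
  have hz : H.adjMatrix ℝ *ᵥ (y ∘ e.symm) = lam • (y ∘ e.symm) := by
    funext v
    have hsum : (H.adjMatrix ℝ *ᵥ (y ∘ e.symm)) v
        = ∑ a : α, (if G.Adj (e.symm v) a then 1 else 0) * y a := by
      rw [Matrix.mulVec]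
      simp only [dotProduct, SimpleGraph.adjMatrix_apply, Function.comp_apply]
      exact Fintype.sum_equiv e.symm _ _
        (fun w => congrArg (· * y (e.symm w)) (if_congr (hadj v w) rfl rfl))
    rw [hsum]
    have := congrFun hy (e.symm v)
    rw [Matrix.mulVec] at this
    simp only [dotProduct, SimpleGraph.adjMatrix_apply] at this
    simpa [Pi.smul_apply, smul_eq_mul] using this
  have hz0 : (y ∘ e.symm) ≠ 0 := by
    intro hc
    apply hy0
    funext a
    have := congrFun hc (e a)
    simpa using this
  exact Module.End.hasEigenvalue_of_hasEigenvector
    ⟨Module.End.mem_eigenspace_iff.mpr (by simpa [Matrix.mulVecLin_apply] using hz), hz0⟩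

lemma aux_book_two_nbrs {k' : ℕ} (hk' : 1 ≤ k') (v : Fin 2 ⊕ Fin k') :
    ∃ w1 w2, w1 ≠ w2 ∧ (bookS k').Adj v w1 ∧ (bookS k').Adj v w2 := by
  have hadj : ∀ a b : Fin 2 ⊕ Fin k', a ≠ b → (a.isLeft ∨ b.isLeft) → (bookS k').Adj a b := by
    intro a b hab h
    rw [bookS, SimpleGraph.fromRel_adj]
    refine ⟨hab, ?_⟩
    rcases h with h | h
    · exact Or.inl (by simpa using h)
    · exact Or.inr (by simpa using h)
  rcases v with i | j
  · refine ⟨inl (if i = 0 then 1 else 0), inr ⟨0, hk'⟩, by simp, ?_, ?_⟩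
    · apply hadj _ _ ?_ (Or.inl (by simp))
      rcases Fin.exists_fin_two.mp ⟨i, rfl⟩ with h | h <;> simp_all
    · exact hadj _ _ (by simp) (Or.inl (by simp))
  · exact ⟨inl 0, inl 1, by simp, hadj _ _ (by simp) (Or.inr (by simp)),
      hadj _ _ (by simp) (Or.inr (by simp))⟩

lemma pend_not_book {k k' : ℕ} (hk' : 1 ≤ k')
    (ψ : pendantS k 2 ≃g bookS k') : False := by
  set q0 : Fin 2 ⊕ (Fin k ⊕ Fin 2) := inr (inr 0) with hq0
  obtain ⟨w1, w2, hw, h1, h2⟩ := aux_book_two_nbrs hk' (ψ q0)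
  have a1 : (pendantS k 2).Adj (ψ.symm (ψ q0)) (ψ.symm w1) := ψ.symm.map_adj_iff.mpr h1
  have a2 : (pendantS k 2).Adj (ψ.symm (ψ q0)) (ψ.symm w2) := ψ.symm.map_adj_iff.mpr h2
  rw [RelIso.symm_apply_apply] at a1 a2
  have e1 : ψ.symm w1 = inl 0 := pend_nbr_q a1
  have e2 : ψ.symm w2 = inl 0 := pend_nbr_q a2
  exact hw (ψ.symm.toEquiv.injective (e1.trans e2.symm))

lemma pend_no_isolated (hs : 1 ≤ s) (v : Fin 2 ⊕ (Fin s ⊕ Fin t)) :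
    ∃ w, (pendantS s t).Adj v w := by
  rcases v with i | (p | q)
  · exact ⟨inr (inl ⟨0, hs⟩), pend_adj_lp i ⟨0, hs⟩⟩
  · exact ⟨inl 0, (pend_adj_lp 0 p).symm⟩
  · exact ⟨inl 0, ((pend_adj_lq 0 q).mpr rfl).symm⟩

end Aux

theorem stmt9 {V : Type*} [Fintype V] (G : SimpleGraph V) (m : ℕ)
    (hodd : Odd m) (hm : 23 ≤ m) (hmax : MaxInFamily m G)
    (x : V → ℝ) (hx : ∀ v, 0 < x v)
    (heig : G.adjMatrix ℝ *ᵥ x = specRad G • x)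
    (u : V) (hu : ∀ v, x v ≤ x u) :
    4 ≤ edgesIn G (Nplus G u) := by
  classical
  -- set up the parameter k with m = 2k + 3
  obtain ⟨r, hr⟩ := hodd
  set k : ℕ := r - 1 with hkdef
  have hk : m = 2 * k + 3 := by omega
  have hk10 : 10 ≤ k := by omega
  -- the competitor graph: pendantS k 2, transported to Fin n
  obtain ⟨lam, b, c, d, hlam5, hlamsq, E1, E2, E3, E4⟩ := aux_exists_lam k hk10
  have E1' : b + (k : ℝ) * c + ((2 : ℕ) : ℝ) * d = lam * 1 := by push_cast; linarith
  have hy : (pendantS k 2).adjMatrix ℝ *ᵥ (pvec k 2 b c d) = lam • (pvec k 2 b c d) :=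
    pend_mulVec_eq lam b c d E1' E2 E3 E4
  have hy0 : pvec k 2 b c d ≠ 0 := by
    intro hc
    have := congrFun hc (Sum.inl 0)
    simp [pvec] at this
  set V' := (Fin 2 ⊕ (Fin k ⊕ Fin 2)) with hV'
  set e : V' ≃ Fin (Fintype.card V') := Fintype.equivFin V' with he
  set H : SimpleGraph (Fin (Fintype.card V')) := SimpleGraph.comap (e.symm : _ → V') (pendantS k 2)
    with hH
  have φprop : ∀ a b : V', H.Adj (e a) (e b) ↔ (pendantS k 2).Adj a b := by
    intro a b
    rw [SimpleGraph.comap_adj]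
    simp
  let φ : pendantS k 2 ≃g H := ⟨e, by intro a b; exact φprop a b⟩
  -- InFamily m H
  have hInF : InFamily m H := by
    refine ⟨?_, ?_, ?_, ?_⟩
    · rintro ⟨f, hf⟩
      refine pend_gem_free (s := k) (t := 2) ⟨f.trans φ.symm.toEquiv.toEmbedding, ?_⟩
      intro a b hab
      have := φ.symm.map_adj_iff.mpr (hf a b hab)
      simpa using this
    · rw [← aux_iso_edgeCount φ, pend_edgeCount]
      omega
    · intro v
      obtain ⟨w, hw⟩ := pend_no_isolated (by omega) (e.symm v)
      refine ⟨e w, ?_⟩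
      rw [hH, SimpleGraph.comap_adj]
      simpa using hw
    · rintro ⟨ψ⟩
      exact pend_not_book (k := k) (by omega) (φ.trans ψ)
  -- spectral radius comparison
  have hEV : Module.End.HasEigenvalue (Matrix.mulVecLin (H.adjMatrix ℝ)) lam :=
    aux_hasEig_comap e (pendantS k 2) lam _ hy hy0
  have hlamH : lam ≤ specRad H := aux_le_specRad H lam hEV
  have hHG : specRad H ≤ specRad G := hmax.2 _ H hInF
  have hrhoge : lam ≤ specRad G := le_trans hlamH hHG
  set ρ : ℝ := specRad G with hρ
  -- upper bound: ρ² x_u ≤ (m + e(N(u))) x_u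
  set S : Finset V := G.neighborFinset u with hS
  have hrow : ∀ v : V, ρ * x v = ∑ w ∈ G.neighborFinset v, x w := by
    intro v
    have := congrFun heig v
    rw [SimpleGraph.adjMatrix_mulVec_apply] at this
    simpa [Pi.smul_apply, smul_eq_mul] using this.symm
  have hsq : ρ ^ 2 * x u ≤ ((edgeCount G + edgesIn G S : ℕ) : ℝ) * x u := by
    have h1 : ρ ^ 2 * x u = ∑ v ∈ S, (ρ * x v) := by
      rw [pow_two, mul_assoc, hrow u, Finset.mul_sum]
    rw [h1]
    calc ∑ v ∈ S, ρ * x v = ∑ v ∈ S, ∑ w ∈ G.neighborFinset v, x w :=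
          Finset.sum_congr rfl fun v _ => hrow v
      _ ≤ ∑ v ∈ S, (G.degree v : ℝ) * x u := by
          refine Finset.sum_le_sum fun v _ => ?_
          have := Finset.sum_le_card_nsmul (G.neighborFinset v) x (x u) (fun w _ => hu w)
          rw [SimpleGraph.card_neighborFinset_eq_degree] at this
          simpa [nsmul_eq_mul] using this
      _ = ((∑ v ∈ S, G.degree v : ℕ) : ℝ) * x u := by
          rw [← Finset.sum_mul]
          push_cast
          ring
      _ ≤ ((edgeCount G + edgesIn G S : ℕ) : ℝ) * x u := by
          apply mul_le_mul_of_nonneg_right _ (le_of_lt (hx u))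
          exact_mod_cast aux_sum_degree_le G S
  have hxu : (0 : ℝ) < x u := hx u
  have hup : ρ ^ 2 ≤ ((edgeCount G + edgesIn G S : ℕ) : ℝ) :=
    le_of_mul_le_mul_right hsq hxu
  -- lower bound on ρ²
  have hrho5 : (5 : ℝ) < ρ := lt_of_lt_of_le hlam5 hrhoge
  have hrhosq : (m : ℝ) + 3 < ρ ^ 2 := by
    have h1 : lam ^ 2 ≤ ρ ^ 2 := by nlinarith
    have h2 : (m : ℝ) = 2 * k + 3 := by exact_mod_cast congrArg (Nat.cast : ℕ → ℝ) hk
    nlinarith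
  -- conclusion
  have hmE : edgeCount G = m := hmax.1.2.1
  have hfin : (m : ℝ) + 3 < (m : ℝ) + (edgesIn G S : ℝ) := by
    have := lt_of_lt_of_le hrhosq hup
    push_cast at this
    rw [hmE] at this
    push_cast at this
    linarith
  have h4 : 4 ≤ edgesIn G S := by
    have h3 : (3 : ℝ) < (edgesIn G S : ℝ) := by linarith
    have : (3 : ℕ) < edgesIn G S := by exact_mod_cast h3
    omega
  rw [aux_edgesIn_Nplus_eq]
  exact h4
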